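/- For n ≥ 2, there exists a polynomial map f : ℝⁿ → ℝⁿ whose image is the complement ℝⁿ \ Q̄ₙ of the closed orthant Q̄ₙ := {x ∈ ℝⁿ : x₁ ≥ 0, …, xₙ ≥ 0}. -/

import Mathlib

open Finset

namespace Stmt16Aux

noncomputable def psi (N : ℕ) (z : ℕ → ℝ) (d : ℝ) : ℝ :=
  -d * (1 + ∑ j ∈ Finset.range N, (z j / (d - ((j : ℝ) + 1))) ^ 3 * (d - ((j : ℝ) + 1)))

lemma term_eq (z : ℕ → ℝ) (d : ℝ) (j : ℕ) (h : d - ((j : ℝ) + 1) ≠ 0) :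
    (z j / (d - ((j : ℝ) + 1))) ^ 3 * (d - ((j : ℝ) + 1))
      = (z j) ^ 3 / (d - ((j : ℝ) + 1)) ^ 2 := by
  field_simp

lemma term_bound (z : ℕ → ℝ) (d c : ℝ) (j : ℕ) (hc : 0 < c)
    (hcb : z j ≠ 0 → c ≤ |d - ((j : ℝ) + 1)|) :
    |(z j / (d - ((j : ℝ) + 1))) ^ 3 * (d - ((j : ℝ) + 1))| ≤ |z j| ^ 3 / c ^ 2 := by
  by_cases hz : z j = 0
  · simp [hz]
  · have hcb' := hcb hz
    have he : d - ((j : ℝ) + 1) ≠ 0 := by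
      intro h0
      rw [h0] at hcb'
      simp at hcb'
      linarith
    rw [term_eq z d j he, abs_div, abs_pow, abs_pow, sq_abs]
    have h1 : c ^ 2 ≤ (d - ((j : ℝ) + 1)) ^ 2 := by
      have h2 := mul_self_le_mul_self hc.le hcb'
      have h3 := sq_abs (d - ((j : ℝ) + 1))
      nlinarith
    apply div_le_div_of_nonneg_left (by positivity) (by positivity) h1

lemma sum_bound (N : ℕ) (z : ℕ → ℝ) (d c : ℝ) (s : Finset ℕ) (hc : 0 < c)
    (hs : s ⊆ Finset.range N)
    (hb : ∀ j ∈ s, z j ≠ 0 → c ≤ |d - ((j : ℝ) + 1)|) :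
    |∑ j ∈ s, (z j / (d - ((j : ℝ) + 1))) ^ 3 * (d - ((j : ℝ) + 1))|
      ≤ (∑ j ∈ Finset.range N, |z j| ^ 3) / c ^ 2 := by
  calc |∑ j ∈ s, (z j / (d - ((j : ℝ) + 1))) ^ 3 * (d - ((j : ℝ) + 1))|
      ≤ ∑ j ∈ s, |(z j / (d - ((j : ℝ) + 1))) ^ 3 * (d - ((j : ℝ) + 1))| :=
        Finset.abs_sum_le_sum_abs _ _
    _ ≤ ∑ j ∈ s, |z j| ^ 3 / c ^ 2 :=
        Finset.sum_le_sum fun j hj => term_bound z d c j hc (hb j hj)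
    _ ≤ ∑ j ∈ Finset.range N, |z j| ^ 3 / c ^ 2 :=
        Finset.sum_le_sum_of_subset_of_nonneg hs (fun j _ _ => by positivity)
    _ = _ := by rw [Finset.sum_div]

lemma Mnonneg (N : ℕ) (z : ℕ → ℝ) : 0 ≤ ∑ j ∈ Finset.range N, |z j| ^ 3 :=
  Finset.sum_nonneg fun j _ => by positivity

/-- IVT packaging. -/
lemma ivt_main (N : ℕ) (z : ℕ → ℝ) (w : ℝ) (d₁ d₂ : ℝ) (h₁ : 0 < d₁) (h₁₂ : d₁ ≤ d₂)
    (hsafe : ∀ d ∈ Set.Icc d₁ d₂, ∀ j, j < N → z j ≠ 0 → d - ((j : ℝ) + 1) ≠ 0)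
    (h₂w : psi N z d₂ ≤ w) (hw₁ : w ≤ psi N z d₁) :
    ∃ d : ℝ, 0 < d ∧ ∃ γ : ℕ → ℝ,
      (∀ j, j < N → γ j * (d - ((j : ℝ) + 1)) = z j) ∧
      -d * (1 + ∑ j ∈ Finset.range N, (γ j) ^ 3 * (d - ((j : ℝ) + 1))) = w := by
  have hcont : ContinuousOn (psi N z) (Set.Icc d₁ d₂) := by
    unfold psi
    apply ContinuousOn.mul
    · exact (continuous_neg.comp continuous_id).continuousOn
    · apply ContinuousOn.add continuousOn_const
      apply continuousOn_finset_sum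
      intro j hj
      by_cases hz : z j = 0
      · have : (fun d : ℝ => (z j / (d - ((j : ℝ) + 1))) ^ 3 * (d - ((j : ℝ) + 1)))
            = fun _ : ℝ => (0 : ℝ) := by
          funext d; simp [hz]
        rw [this]; exact continuousOn_const
      · have hden : ∀ d ∈ Set.Icc d₁ d₂, d - ((j : ℝ) + 1) ≠ 0 :=
          fun d hd => hsafe d hd j (Finset.mem_range.mp hj) hz
        exact (((continuousOn_const.div (continuousOn_id.sub continuousOn_const) hden).pow 3).mul
          (continuousOn_id.sub continuousOn_const))
  have hmem : w ∈ Set.Icc (psi N z d₂) (psi N z d₁) := ⟨h₂w, hw₁⟩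
  obtain ⟨d, hdmem, hdval⟩ := intermediate_value_Icc' h₁₂ hcont hmem
  refine ⟨d, lt_of_lt_of_le h₁ hdmem.1, fun j => z j / (d - ((j : ℝ) + 1)), ?_, ?_⟩
  · intro j hj
    by_cases hz : z j = 0
    · simp [hz]
    · exact div_mul_cancel₀ _ (hsafe d hdmem j hj hz)
  · exact hdval

/-- Left endpoint near a pole with negative coefficient. -/
lemma pole_low (N : ℕ) (z : ℕ → ℝ) (w : ℝ) (a : ℕ) (ha : a < N) (hza : z a < 0) :
    ∃ d₁ : ℝ, (a : ℝ) + 1 < d₁ ∧ d₁ ≤ (a : ℝ) + 3/2 ∧ |w| + 1 ≤ psi N z d₁ := by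
  set M : ℝ := ∑ j ∈ Finset.range N, |z j| ^ 3 with hMdef
  have hM0 : 0 ≤ M := Mnonneg N z
  have habs0 : (0:ℝ) ≤ |w| := abs_nonneg w
  have hca : (0:ℝ) ≤ (a:ℝ) := Nat.cast_nonneg a
  have hzap : (0:ℝ) < -z a := by linarith
  have hza3 : (0:ℝ) < (-z a) ^ 3 := by positivity
  set B : ℝ := ((a:ℝ) + 2) * (1 + 4 * M) + |w| + 1 with hB
  have hBpos : 0 < B := by nlinarith
  have hX : 0 < ((a:ℝ) + 1) * (-z a) ^ 3 / B := div_pos (mul_pos (by linarith) hza3) hBpos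
  set ε : ℝ := min (1/4) (Real.sqrt (((a:ℝ) + 1) * (-z a) ^ 3 / B)) with hε
  have hε0 : 0 < ε := lt_min (by norm_num) (Real.sqrt_pos.mpr hX)
  have hε14 : ε ≤ 1/4 := min_le_left _ _
  have hε2 : ε ^ 2 ≤ ((a:ℝ) + 1) * (-z a) ^ 3 / B := by
    have h1 : ε ≤ Real.sqrt (((a:ℝ) + 1) * (-z a) ^ 3 / B) := min_le_right _ _
    calc ε ^ 2 ≤ (Real.sqrt (((a:ℝ) + 1) * (-z a) ^ 3 / B)) ^ 2 :=
          pow_le_pow_left₀ hε0.le h1 2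
      _ = _ := Real.sq_sqrt hX.le
  have hkey : B ≤ ((a:ℝ) + 1) * ((-z a) ^ 3 / ε ^ 2) := by
    have hε2' : ε ^ 2 * B ≤ ((a:ℝ) + 1) * (-z a) ^ 3 := by
      rw [← le_div_iff₀ hBpos]; exact hε2
    rw [← mul_div_assoc, le_div_iff₀ (pow_pos hε0 2)]
    linarith
  refine ⟨(a:ℝ) + 1 + ε, by linarith, by linarith, ?_⟩
  set d₁ : ℝ := (a:ℝ) + 1 + ε with hd₁
  have hd₁pos : 0 < d₁ := by rw [hd₁]; linarith
  have hd₁le : d₁ ≤ (a:ℝ) + 2 := by rw [hd₁]; linarith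
  have hd₁ge : (a:ℝ) + 1 ≤ d₁ := by rw [hd₁]; linarith
  have hεne : d₁ - ((a:ℝ) + 1) = ε := by rw [hd₁]; ring
  have hRbound : |∑ j ∈ (Finset.range N).erase a,
      (z j / (d₁ - ((j : ℝ) + 1))) ^ 3 * (d₁ - ((j : ℝ) + 1))| ≤ M / (1/2 : ℝ) ^ 2 := by
    apply sum_bound N z d₁ (1/2) _ (by norm_num) (Finset.erase_subset _ _)
    intro j hj _
    obtain ⟨hja, hjN⟩ := Finset.mem_erase.mp hj
    rcases lt_or_gt_of_ne hja with h | h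
    · have hja' : (j:ℝ) + 1 ≤ (a:ℝ) := by exact_mod_cast Nat.succ_le_of_lt h
      have h5 : (1:ℝ) ≤ d₁ - ((j:ℝ) + 1) := by rw [hd₁]; linarith
      calc (1/2 : ℝ) ≤ 1 := by norm_num
        _ ≤ |d₁ - ((j:ℝ) + 1)| := le_trans h5 (le_abs_self _)
    · have hja' : (a:ℝ) + 1 ≤ (j:ℝ) := by exact_mod_cast Nat.succ_le_of_lt h
      have h5 : d₁ - ((j:ℝ) + 1) ≤ -(3/4) := by rw [hd₁]; linarith
      calc (1/2 : ℝ) ≤ 3/4 := by norm_num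
        _ ≤ |d₁ - ((j:ℝ) + 1)| := by rw [abs_of_neg (by linarith)]; linarith
  unfold psi
  rw [← Finset.sum_erase_add _ _ (Finset.mem_range.mpr ha)]
  set R := ∑ j ∈ (Finset.range N).erase a,
    (z j / (d₁ - ((j : ℝ) + 1))) ^ 3 * (d₁ - ((j : ℝ) + 1)) with hRdef
  clear_value R
  have hTa : (z a / (d₁ - ((a:ℝ) + 1))) ^ 3 * (d₁ - ((a:ℝ) + 1)) = (z a) ^ 3 / ε ^ 2 := by
    rw [term_eq z d₁ a (by rw [hεne]; exact ne_of_gt hε0), hεne]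
  rw [hTa]
  have hM4 : M / (1/2 : ℝ) ^ 2 = 4 * M := by
    rw [div_eq_iff (by norm_num : ((1:ℝ)/2) ^ 2 ≠ 0)]; ring
  rw [hM4] at hRbound
  obtain ⟨hRlo, hRhi⟩ := abs_le.mp hRbound
  have e2 : ((a:ℝ) + 1) * ((-z a) ^ 3 / ε ^ 2) ≤ d₁ * ((-z a) ^ 3 / ε ^ 2) :=
    mul_le_mul_of_nonneg_right hd₁ge (by positivity)
  have e1 : d₁ * R ≤ ((a:ℝ) + 2) * (4 * M) := by
    calc d₁ * R ≤ d₁ * (4 * M) := mul_le_mul_of_nonneg_left hRhi hd₁pos.le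
      _ ≤ ((a:ℝ) + 2) * (4 * M) := mul_le_mul_of_nonneg_right hd₁le (by linarith)
  have expand : -d₁ * (1 + (R + (z a) ^ 3 / ε ^ 2))
      = -d₁ - d₁ * R + d₁ * ((-z a) ^ 3 / ε ^ 2) := by ring
  rw [expand]
  have hkey' : ((a:ℝ) + 2) * (1 + 4 * M) + |w| + 1
      ≤ ((a:ℝ) + 1) * ((-z a) ^ 3 / ε ^ 2) := by rw [← hB]; exact hkey
  clear_value M B ε d₁
  linarith

/-- Right endpoint near a pole with positive coefficient. -/
lemma pole_high (N : ℕ) (z : ℕ → ℝ) (w : ℝ) (k : ℕ) (hk : k < N) (hzk : 0 < z k) :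
    ∃ d₂ : ℝ, (k : ℝ) + 1/2 ≤ d₂ ∧ d₂ < (k : ℝ) + 1 ∧ psi N z d₂ ≤ -(|w| + 1) := by
  set M : ℝ := ∑ j ∈ Finset.range N, |z j| ^ 3 with hMdef
  have hM0 : 0 ≤ M := Mnonneg N z
  have habs0 : (0:ℝ) ≤ |w| := abs_nonneg w
  have hck : (0:ℝ) ≤ (k:ℝ) := Nat.cast_nonneg k
  set B : ℝ := ((k:ℝ) + 1) * (4 * M) + |w| + 1 with hB
  have hBpos : 0 < B := by nlinarith
  have hX : 0 < (1/2 : ℝ) * (z k) ^ 3 / B := div_pos (mul_pos (by norm_num) (by positivity)) hBpos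
  set ε : ℝ := min (1/4) (Real.sqrt ((1/2 : ℝ) * (z k) ^ 3 / B)) with hε
  have hε0 : 0 < ε := lt_min (by norm_num) (Real.sqrt_pos.mpr hX)
  have hε14 : ε ≤ 1/4 := min_le_left _ _
  have hε2 : ε ^ 2 ≤ (1/2 : ℝ) * (z k) ^ 3 / B := by
    have h1 : ε ≤ Real.sqrt ((1/2 : ℝ) * (z k) ^ 3 / B) := min_le_right _ _
    calc ε ^ 2 ≤ (Real.sqrt ((1/2 : ℝ) * (z k) ^ 3 / B)) ^ 2 :=
          pow_le_pow_left₀ hε0.le h1 2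
      _ = _ := Real.sq_sqrt hX.le
  have hkey : B ≤ (1/2 : ℝ) * ((z k) ^ 3 / ε ^ 2) := by
    have hε2' : ε ^ 2 * B ≤ (1/2 : ℝ) * (z k) ^ 3 := by
      rw [← le_div_iff₀ hBpos]; exact hε2
    rw [← mul_div_assoc, le_div_iff₀ (pow_pos hε0 2)]
    linarith
  refine ⟨(k:ℝ) + 1 - ε, by linarith, by linarith, ?_⟩
  set d₂ : ℝ := (k:ℝ) + 1 - ε with hd₂
  have hd₂pos : 0 < d₂ := by rw [hd₂]; linarith
  have hd₂le : d₂ ≤ (k:ℝ) + 1 := by rw [hd₂]; linarith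
  have hd₂ge : (1/2 : ℝ) ≤ d₂ := by rw [hd₂]; linarith
  have hεne : d₂ - ((k:ℝ) + 1) = -ε := by rw [hd₂]; ring
  have hRbound : |∑ j ∈ (Finset.range N).erase k,
      (z j / (d₂ - ((j : ℝ) + 1))) ^ 3 * (d₂ - ((j : ℝ) + 1))| ≤ M / (1/2 : ℝ) ^ 2 := by
    apply sum_bound N z d₂ (1/2) _ (by norm_num) (Finset.erase_subset _ _)
    intro j hj _
    obtain ⟨hja, hjN⟩ := Finset.mem_erase.mp hj
    rcases lt_or_gt_of_ne hja with h | h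
    · have hja' : (j:ℝ) + 1 ≤ (k:ℝ) := by exact_mod_cast Nat.succ_le_of_lt h
      have h5 : (1/2:ℝ) ≤ d₂ - ((j:ℝ) + 1) := by rw [hd₂]; linarith
      exact le_trans h5 (le_abs_self _)
    · have hja' : (k:ℝ) + 1 ≤ (j:ℝ) := by exact_mod_cast Nat.succ_le_of_lt h
      have h5 : d₂ - ((j:ℝ) + 1) ≤ -1 := by rw [hd₂]; linarith
      calc (1/2 : ℝ) ≤ 1 := by norm_num
        _ ≤ |d₂ - ((j:ℝ) + 1)| := by rw [abs_of_neg (by linarith)]; linarith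
  unfold psi
  rw [← Finset.sum_erase_add _ _ (Finset.mem_range.mpr hk)]
  set R := ∑ j ∈ (Finset.range N).erase k,
    (z j / (d₂ - ((j : ℝ) + 1))) ^ 3 * (d₂ - ((j : ℝ) + 1)) with hRdef
  clear_value R
  have hTk : (z k / (d₂ - ((k:ℝ) + 1))) ^ 3 * (d₂ - ((k:ℝ) + 1)) = (z k) ^ 3 / ε ^ 2 := by
    rw [term_eq z d₂ k (by rw [hεne]; exact neg_ne_zero.mpr (ne_of_gt hε0)), hεne, neg_pow]
    norm_num
  rw [hTk]
  have hM4 : M / (1/2 : ℝ) ^ 2 = 4 * M := by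
    rw [div_eq_iff (by norm_num : ((1:ℝ)/2) ^ 2 ≠ 0)]; ring
  rw [hM4] at hRbound
  obtain ⟨hRlo, hRhi⟩ := abs_le.mp hRbound
  have e2 : (1/2 : ℝ) * ((z k) ^ 3 / ε ^ 2) ≤ d₂ * ((z k) ^ 3 / ε ^ 2) :=
    mul_le_mul_of_nonneg_right hd₂ge (by positivity)
  have e1 : -(((k:ℝ) + 1) * (4 * M)) ≤ d₂ * R := by
    calc -(((k:ℝ) + 1) * (4 * M)) ≤ -(d₂ * (4 * M)) := by
          have := mul_le_mul_of_nonneg_right hd₂le (by linarith : (0:ℝ) ≤ 4 * M)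
          linarith
      _ ≤ d₂ * R := by
          have := mul_le_mul_of_nonneg_left hRlo hd₂pos.le
          linarith
  have expand : -d₂ * (1 + (R + (z k) ^ 3 / ε ^ 2))
      = -d₂ - d₂ * R - d₂ * ((z k) ^ 3 / ε ^ 2) := by ring
  rw [expand]
  have hkey' : ((k:ℝ) + 1) * (4 * M) + |w| + 1
      ≤ (1/2 : ℝ) * ((z k) ^ 3 / ε ^ 2) := by rw [← hB]; exact hkey
  clear_value M B ε d₂
  linarith

/-- Right endpoint far to the right, when all active indices are ≤ a. -/
lemma far_right (N : ℕ) (z : ℕ → ℝ) (w : ℝ) (a : ℕ)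
    (hbig : ∀ j, j < N → z j ≠ 0 → j ≤ a) :
    ∃ d₂ : ℝ, (a : ℝ) + 2 ≤ d₂ ∧ psi N z d₂ ≤ -(|w| + 1) := by
  set M : ℝ := ∑ j ∈ Finset.range N, |z j| ^ 3 with hMdef
  have hM0 : 0 ≤ M := Mnonneg N z
  have habs0 : (0:ℝ) ≤ |w| := abs_nonneg w
  have hca : (0:ℝ) ≤ (a:ℝ) := Nat.cast_nonneg a
  set r : ℝ := 1 + Real.sqrt (2 * M) + 2 * (|w| + 1) with hr
  have hsq : (0:ℝ) ≤ Real.sqrt (2 * M) := Real.sqrt_nonneg _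
  have hr1 : 1 ≤ r := by rw [hr]; linarith
  have hrpos : 0 < r := by linarith
  have hr2M : 2 * M ≤ r ^ 2 := by
    have h := Real.sq_sqrt (by linarith : (0:ℝ) ≤ 2 * M)
    nlinarith
  have hrw : 2 * (|w| + 1) ≤ r := by rw [hr]; linarith
  refine ⟨(a:ℝ) + 1 + r, by linarith, ?_⟩
  set d₂ : ℝ := (a:ℝ) + 1 + r with hd₂
  have hd₂pos : 0 < d₂ := by rw [hd₂]; linarith
  have hSbound : |∑ j ∈ Finset.range N,
      (z j / (d₂ - ((j : ℝ) + 1))) ^ 3 * (d₂ - ((j : ℝ) + 1))| ≤ M / r ^ 2 := by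
    apply sum_bound N z d₂ r _ hrpos (le_refl _)
    intro j hj hz
    have hja : j ≤ a := hbig j (Finset.mem_range.mp hj) hz
    have hja' : (j:ℝ) ≤ (a:ℝ) := by exact_mod_cast hja
    have h5 : r ≤ d₂ - ((j:ℝ) + 1) := by rw [hd₂]; linarith
    exact le_trans h5 (le_abs_self _)
  have hhalf : M / r ^ 2 ≤ 1/2 := by
    rw [div_le_iff₀ (by positivity)]
    nlinarith
  unfold psi
  obtain ⟨hSlo, _⟩ := abs_le.mp hSbound
  have h12 : (1:ℝ)/2 ≤ 1 + ∑ j ∈ Finset.range N,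
      (z j / (d₂ - ((j : ℝ) + 1))) ^ 3 * (d₂ - ((j : ℝ) + 1)) := by linarith
  have hd₂w : 2 * (|w| + 1) ≤ d₂ := by rw [hd₂]; linarith
  clear_value M r d₂
  nlinarith

/-- Left endpoint near zero. -/
lemma near_zero (N : ℕ) (z : ℕ → ℝ) (w : ℝ) (hw : w < 0) :
    ∃ d₁ : ℝ, 0 < d₁ ∧ d₁ ≤ 1/2 ∧ w ≤ psi N z d₁ := by
  set M : ℝ := ∑ j ∈ Finset.range N, |z j| ^ 3 with hMdef
  have hM0 : 0 ≤ M := Mnonneg N z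
  have hwpos : 0 < -w := by linarith
  refine ⟨min (1/2 : ℝ) (-w / (2 * (1 + 4 * M))),
    lt_min (by norm_num) (div_pos hwpos (by linarith)), min_le_left _ _, ?_⟩
  set d₁ : ℝ := min (1/2 : ℝ) (-w / (2 * (1 + 4 * M))) with hd₁
  have hd₁pos : 0 < d₁ := lt_min (by norm_num) (div_pos hwpos (by linarith))
  have hd₁half : d₁ ≤ 1/2 := min_le_left _ _
  have hd₁w : d₁ ≤ -w / (2 * (1 + 4 * M)) := min_le_right _ _
  have hSbound : |∑ j ∈ Finset.range N,
      (z j / (d₁ - ((j : ℝ) + 1))) ^ 3 * (d₁ - ((j : ℝ) + 1))| ≤ M / (1/2:ℝ) ^ 2 := by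
    apply sum_bound N z d₁ (1/2) _ (by norm_num) (le_refl _)
    intro j hj hz
    have hcj : (0:ℝ) ≤ (j:ℝ) := Nat.cast_nonneg j
    have h5 : d₁ - ((j:ℝ) + 1) ≤ -(1/2) := by linarith
    have h6 : (1/2:ℝ) ≤ |d₁ - ((j:ℝ) + 1)| := by
      rw [abs_of_neg (by linarith)]; linarith
    exact h6
  have hM4 : M / (1/2 : ℝ) ^ 2 = 4 * M := by
    rw [div_eq_iff (by norm_num : ((1:ℝ)/2) ^ 2 ≠ 0)]; ring
  rw [hM4] at hSbound
  obtain ⟨_, hShi⟩ := abs_le.mp hSbound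
  unfold psi
  have h1 : -d₁ * (1 + ∑ j ∈ Finset.range N,
      (z j / (d₁ - ((j : ℝ) + 1))) ^ 3 * (d₁ - ((j : ℝ) + 1)))
      ≥ -d₁ * (1 + 4 * M) := by
    nlinarith [mul_le_mul_of_nonneg_left hShi hd₁pos.le]
  have h2 : d₁ * (1 + 4 * M) ≤ (-w / (2 * (1 + 4 * M))) * (1 + 4 * M) :=
    mul_le_mul_of_nonneg_right hd₁w (by linarith)
  have h3 : (-w / (2 * (1 + 4 * M))) * (1 + 4 * M) = -w / 2 := by
    field_simp
  clear_value M d₁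
  linarith


lemma stage1 (N : ℕ) (z : ℕ → ℝ) (w : ℝ)
    (H : (∃ j, j < N ∧ z j < 0) ∨ ((∀ j, j < N → 0 ≤ z j) ∧ w < 0)) :
    ∃ d : ℝ, 0 < d ∧ ∃ γ : ℕ → ℝ,
      (∀ j, j < N → γ j * (d - ((j : ℝ) + 1)) = z j) ∧
      -d * (1 + ∑ j ∈ Finset.range N, (γ j) ^ 3 * (d - ((j : ℝ) + 1))) = w := by
  classical
  have hwle : w ≤ |w| := le_abs_self w
  have hwge : -|w| ≤ w := neg_abs_le w
  rcases H with ⟨j₀, hj₀N, hj₀neg⟩ | ⟨hpos, hw⟩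
  · -- some z j < 0 with j < N ; let a be the largest such index
    set a := Nat.findGreatest (fun j => z j < 0) (N - 1) with hadef
    have haneg : z a < 0 :=
      Nat.findGreatest_spec (P := fun j => z j < 0) (Nat.le_pred_of_lt hj₀N) hj₀neg
    have haN : a < N := by
      have h : a ≤ N - 1 := Nat.findGreatest_le (N - 1)
      omega
    have hagt : ∀ j, a < j → j < N → 0 ≤ z j := by
      intro j hj hjN
      by_contra hcon
      push_neg at hcon
      exact Nat.findGreatest_is_greatest hj (by omega) hcon
    have hca : (0:ℝ) ≤ (a:ℝ) := Nat.cast_nonneg a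
    obtain ⟨d₁, hd₁gt, hd₁le, hψ₁⟩ := pole_low N z w a haN haneg
    have hd₁pos : 0 < d₁ := lt_trans (by linarith) hd₁gt
    by_cases hEx : ∃ j, a < j ∧ j < N ∧ z j ≠ 0
    · -- pole on the right at j'
      set j' := Nat.find hEx with hj'def
      have hspec := Nat.find_spec hEx
      rw [← hj'def] at hspec
      obtain ⟨hj'a, hj'N, hj'ne⟩ := hspec
      have hj'pos : 0 < z j' := lt_of_le_of_ne (hagt j' hj'a hj'N) (Ne.symm hj'ne)
      have hj'min : ∀ j, a < j → j < j' → z j = 0 := by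
        intro j hja hjj
        by_contra hcon
        exact Nat.find_min hEx (hj'def ▸ hjj) ⟨hja, by omega, hcon⟩
      have haj' : (a:ℝ) + 1 ≤ (j':ℝ) := by exact_mod_cast Nat.succ_le_of_lt hj'a
      obtain ⟨d₂, hd₂ge, hd₂lt, hψ₂⟩ := pole_high N z w j' hj'N hj'pos
      have hd₁₂ : d₁ ≤ d₂ := by linarith
      have hsafe : ∀ d ∈ Set.Icc d₁ d₂, ∀ j, j < N → z j ≠ 0 → d - ((j : ℝ) + 1) ≠ 0 := by
        intro d hd j hjN hz
        rcases le_or_gt j a with h | h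
        · have hja' : (j:ℝ) ≤ (a:ℝ) := by exact_mod_cast h
          have : 0 < d - ((j:ℝ) + 1) := by
            have := hd.1
            linarith
          exact ne_of_gt this
        · have hjj' : j' ≤ j := by
            by_contra hcon
            push_neg at hcon
            exact hz (hj'min j h hcon)
          have hjj'' : (j':ℝ) ≤ (j:ℝ) := by exact_mod_cast hjj'
          have : d - ((j:ℝ) + 1) < 0 := by
            have := hd.2
            linarith
          exact ne_of_lt this
      have habs0 : (0:ℝ) ≤ |w| := abs_nonneg w
      exact ivt_main N z w d₁ d₂ hd₁pos hd₁₂ hsafe (by linarith) (by linarith)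
    · push_neg at hEx
      have hbig : ∀ j, j < N → z j ≠ 0 → j ≤ a := by
        intro j hjN hz
        by_contra hcon
        push_neg at hcon
        exact hz (hEx j hcon hjN)
      obtain ⟨d₂, hd₂ge, hψ₂⟩ := far_right N z w a hbig
      have hd₁₂ : d₁ ≤ d₂ := by linarith
      have hsafe : ∀ d ∈ Set.Icc d₁ d₂, ∀ j, j < N → z j ≠ 0 → d - ((j : ℝ) + 1) ≠ 0 := by
        intro d hd j hjN hz
        have hja : j ≤ a := hbig j hjN hz
        have hja' : (j:ℝ) ≤ (a:ℝ) := by exact_mod_cast hja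
        have : 0 < d - ((j:ℝ) + 1) := by
          have := hd.1
          linarith
        exact ne_of_gt this
      have habs0 : (0:ℝ) ≤ |w| := abs_nonneg w
      exact ivt_main N z w d₁ d₂ hd₁pos hd₁₂ hsafe (by linarith) (by linarith)
  · -- all z j ≥ 0 for j < N, and w < 0
    by_cases hEx2 : ∃ j, j < N ∧ z j ≠ 0
    · set m := Nat.find hEx2 with hmdef
      have hspec := Nat.find_spec hEx2
      rw [← hmdef] at hspec
      obtain ⟨hmN, hmne⟩ := hspec
      have hmpos : 0 < z m := lt_of_le_of_ne (hpos m hmN) (Ne.symm hmne)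
      have hmmin : ∀ j, j < m → z j = 0 := by
        intro j hj
        by_contra hcon
        exact Nat.find_min hEx2 (hmdef ▸ hj) ⟨by omega, hcon⟩
      have hcm : (0:ℝ) ≤ (m:ℝ) := Nat.cast_nonneg m
      obtain ⟨d₁, hd₁pos, hd₁half, hψ₁⟩ := near_zero N z w hw
      obtain ⟨d₂, hd₂ge, hd₂lt, hψ₂⟩ := pole_high N z w m hmN hmpos
      have hd₁₂ : d₁ ≤ d₂ := by linarith
      have hsafe : ∀ d ∈ Set.Icc d₁ d₂, ∀ j, j < N → z j ≠ 0 → d - ((j : ℝ) + 1) ≠ 0 := by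
        intro d hd j hjN hz
        have hmj : m ≤ j := by
          by_contra hcon
          push_neg at hcon
          exact hz (hmmin j hcon)
        have hmj' : (m:ℝ) ≤ (j:ℝ) := by exact_mod_cast hmj
        have : d - ((j:ℝ) + 1) < 0 := by
          have := hd.2
          linarith
        exact ne_of_lt this
      have habs0 : (0:ℝ) ≤ |w| := abs_nonneg w
      exact ivt_main N z w d₁ d₂ hd₁pos hd₁₂ hsafe (by linarith) hψ₁
    · push_neg at hEx2
      refine ⟨-w, by linarith, fun _ => 0, ?_, ?_⟩
      · intro j hj
        rw [hEx2 j hj]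
        ring
      · simp

end Stmt16Aux


private lemma stage2 (Q T : ℝ) (hT : 0 < T) :
    ∃ a b : ℝ, a ^ 2 + (a * b - 1) ^ 2 = T ∧ b * (a * b - 1) = Q := by
  by_cases hQ : Q = 0
  · have hs : Real.sqrt T ≠ 0 := ne_of_gt (Real.sqrt_pos.mpr hT)
    refine ⟨Real.sqrt T, 1 / Real.sqrt T, ?_, ?_⟩
    · have hab : Real.sqrt T * (1 / Real.sqrt T) = 1 := by field_simp
      rw [hab]
      simp [Real.sq_sqrt hT.le]
    · have hab : Real.sqrt T * (1 / Real.sqrt T) = 1 := by field_simp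
      rw [hab, hQ]; ring
  · have hQ2 : 0 < Q ^ 2 := by
      have h := abs_pos.mpr hQ
      have := pow_pos h 2
      rwa [sq_abs] at this
    set φ : ℝ → ℝ := fun u => u ^ 2 * ((1 + u) ^ 2 + Q ^ 2) - T * Q ^ 2 with hφ
    have hc : ContinuousOn φ (Set.Icc 0 (Real.sqrt T + 1)) := by
      apply Continuous.continuousOn; fun_prop
    have h0 : φ 0 = -(T * Q ^ 2) := by simp [hφ]
    have hK : 0 < φ (Real.sqrt T + 1) := by
      have h1 : T < (Real.sqrt T + 1) ^ 2 := by
        nlinarith [Real.sq_sqrt hT.le, Real.sqrt_nonneg T]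
      have h2 : (0:ℝ) ≤ ((Real.sqrt T + 1) * (1 + (Real.sqrt T + 1))) ^ 2 := sq_nonneg _
      simp only [hφ]
      nlinarith [mul_pos (sub_pos.mpr h1) hQ2]
    have h0le : (0:ℝ) ≤ Real.sqrt T + 1 := by positivity
    have hsub : (0:ℝ) ∈ Set.Icc (φ 0) (φ (Real.sqrt T + 1)) := by
      constructor
      · rw [h0]; nlinarith
      · exact hK.le
    obtain ⟨u, hu, hu0⟩ := intermediate_value_Icc h0le hc hsub
    have hune : u ≠ 0 := by
      rintro rfl
      rw [hu0] at h0
      nlinarith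
    have hupos : 0 < u := lt_of_le_of_ne hu.1 (Ne.symm hune)
    have hφu : u ^ 2 * ((1 + u) ^ 2 + Q ^ 2) - T * Q ^ 2 = 0 := by
      have := hu0; simpa [hφ] using this
    refine ⟨u * (1 + u) / Q, Q / u, ?_, ?_⟩
    · have h1u : (u * (1 + u) / Q) * (Q / u) = 1 + u := by
        field_simp
      rw [h1u]
      have : (u * (1 + u) / Q) ^ 2 = u ^ 2 * (1 + u) ^ 2 / Q ^ 2 := by ring
      rw [this]
      field_simp
      linear_combination hφu
    · have h1u : (u * (1 + u) / Q) * (Q / u) = 1 + u := by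
        field_simp
      rw [h1u]
      field_simp
      ring


open MvPolynomial

/-- For n ≥ 2 the complement of the closed orthant {x₁ ≥ 0, …, xₙ ≥ 0} is a
polynomial image of ℝⁿ. -/
theorem stmt_16 (n : ℕ) (hn : 2 ≤ n) :
    ∃ f : Fin n → MvPolynomial (Fin n) ℝ,
      Set.range (fun x i => eval x (f i)) =
        ({x : Fin n → ℝ | ∀ i, 0 ≤ x i}ᶜ : Set (Fin n → ℝ)) := by
  classical
  have h0 : 0 < n := by omega
  have h1 : 1 < n := by omega
  set N := n - 1 with hN
  have hNn : N < n := by omega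
  have hN1 : 1 ≤ N := by omega
  set i0 : Fin n := ⟨0, h0⟩ with hi0
  set i1 : Fin n := ⟨1, h1⟩ with hi1
  set U : MvPolynomial (Fin n) ℝ := X i0 * X i1 - 1 with hU
  set Tp : MvPolynomial (Fin n) ℝ := X i0 ^ 2 + U ^ 2 with hTp
  set Qp : MvPolynomial (Fin n) ℝ := X i1 * U with hQp
  set cp : ℕ → MvPolynomial (Fin n) ℝ := fun j =>
    if j = 0 then Qp else if h : j + 1 < n then X ⟨j + 1, h⟩ else 0 with hcp
  set f : Fin n → MvPolynomial (Fin n) ℝ := fun i =>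
    if (i : ℕ) < N then cp (i : ℕ) * (Tp - C ((((i : ℕ) : ℝ)) + 1))
    else -Tp * (1 + ∑ j ∈ Finset.range N, (cp j) ^ 3 * (Tp - C ((j : ℝ) + 1))) with hf
  -- evaluation lemmas
  have evalT : ∀ x : Fin n → ℝ, eval x Tp = (x i0) ^ 2 + (x i0 * x i1 - 1) ^ 2 := by
    intro x
    simp [hTp, hU]
  have evalcp : ∀ (x : Fin n → ℝ) (j : ℕ) (hj : j < N),
      eval x (cp j) = if j = 0 then x i1 * (x i0 * x i1 - 1) else
        x ⟨j + 1, by omega⟩ := by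
    intro x j hj
    by_cases hj0 : j = 0
    · simp [hcp, hj0, hQp, hU]
    · have hjn : j + 1 < n := by omega
      simp [hcp, hj0, hjn]
  have evalf1 : ∀ (x : Fin n → ℝ) (i : Fin n) (hi : (i : ℕ) < N),
      eval x (f i) = (eval x (cp (i : ℕ))) *
        ((x i0) ^ 2 + (x i0 * x i1 - 1) ^ 2 - ((((i : ℕ) : ℝ)) + 1)) := by
    intro x i hi
    rw [hf]
    simp only [hi, if_true]
    rw [map_mul, map_sub, evalT, eval_C]
  have evalfN : ∀ (x : Fin n → ℝ) (i : Fin n) (hi : ¬ ((i : ℕ) < N)),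
      eval x (f i) = -((x i0) ^ 2 + (x i0 * x i1 - 1) ^ 2) *
        (1 + ∑ j ∈ Finset.range N, (eval x (cp j)) ^ 3 *
          ((x i0) ^ 2 + (x i0 * x i1 - 1) ^ 2 - ((j : ℝ) + 1))) := by
    intro x i hi
    rw [hf]
    simp only [hi, if_false]
    rw [map_mul, map_neg, evalT, map_add, map_one, map_sum]
    congr 1
    congr 1
    congr 1
    funext j
    rw [map_mul, map_pow, map_sub, evalT, eval_C]
  have htpos : ∀ x : Fin n → ℝ, 0 < (x i0) ^ 2 + (x i0 * x i1 - 1) ^ 2 := by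
    intro x
    rcases eq_or_ne (x i0) 0 with h | h
    · rw [h]; norm_num
    · have h2 : 0 < |x i0| := abs_pos.mpr h
      have h3 : 0 < (x i0) ^ 2 := by
        have := pow_pos h2 2
        rwa [sq_abs] at this
      nlinarith [sq_nonneg (x i0 * x i1 - 1)]
  refine ⟨f, ?_⟩
  ext zz
  simp only [Set.mem_range, Set.mem_compl_iff, Set.mem_setOf_eq, not_forall, not_le]
  constructor
  · rintro ⟨x, rfl⟩
    show ∃ i, eval x (f i) < 0
    by_cases hb : ∀ (j : ℕ) (hj : j < N), 0 ≤ eval x (f ⟨j, lt_trans hj hNn⟩)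
    · refine ⟨⟨N, hNn⟩, ?_⟩
      rw [evalfN x ⟨N, hNn⟩ (by exact Nat.lt_irrefl N)]
      have hS : 0 ≤ ∑ j ∈ Finset.range N, (eval x (cp j)) ^ 3 *
          ((x i0) ^ 2 + (x i0 * x i1 - 1) ^ 2 - ((j : ℝ) + 1)) := by
        apply Finset.sum_nonneg
        intro j hj
        have hjN := Finset.mem_range.mp hj
        have hfj := hb j hjN
        rw [evalf1 x ⟨j, lt_trans hjN hNn⟩ hjN] at hfj
        have heq : (eval x (cp j)) ^ 3 *
            ((x i0) ^ 2 + (x i0 * x i1 - 1) ^ 2 - ((j : ℝ) + 1))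
            = (eval x (cp j)) ^ 2 * ((eval x (cp j)) *
              ((x i0) ^ 2 + (x i0 * x i1 - 1) ^ 2 - ((j : ℝ) + 1))) := by ring
        rw [heq]
        exact mul_nonneg (sq_nonneg _) hfj
      nlinarith [htpos x]
    · push_neg at hb
      obtain ⟨j, hjN, hneg⟩ := hb
      exact ⟨⟨j, lt_trans hjN hNn⟩, hneg⟩
  · rintro ⟨idx, hidx⟩
    set Z : ℕ → ℝ := fun j => if h : j < n then zz ⟨j, h⟩ else 0 with hZ
    have hZj : ∀ (j : ℕ) (h : j < n), Z j = zz ⟨j, h⟩ := by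
      intro j h
      simp [hZ, h]
    set w := zz ⟨N, hNn⟩ with hwdef
    have H : (∃ j, j < N ∧ Z j < 0) ∨ ((∀ j, j < N → 0 ≤ Z j) ∧ w < 0) := by
      by_cases hc : ∃ j, j < N ∧ Z j < 0
      · exact Or.inl hc
      · push_neg at hc
        right
        refine ⟨hc, ?_⟩
        rcases Nat.lt_or_ge (idx : ℕ) N with h | h
        · exfalso
          have h2 := hc (idx : ℕ) h
          rw [hZj _ idx.isLt, Fin.eta] at h2
          linarith
        · have hieq : (idx : ℕ) = N := by omega
          have : idx = ⟨N, hNn⟩ := Fin.ext hieq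
          rw [hwdef, ← this]
          exact hidx
    obtain ⟨d, hdpos, γ, hγ, hsum⟩ := Stmt16Aux.stage1 N Z w H
    obtain ⟨A, B, hT2, hQ2⟩ := stage2 (γ 0) d hdpos
    set x : Fin n → ℝ := fun i =>
      if (i : ℕ) = 0 then A else if (i : ℕ) = 1 then B else γ ((i : ℕ) - 1) with hx
    have hx0 : x i0 = A := by simp [hx, hi0]
    have hx1 : x i1 = B := by simp [hx, hi1]
    have htval : (x i0) ^ 2 + (x i0 * x i1 - 1) ^ 2 = d := by
      rw [hx0, hx1]; exact hT2
    have hqval : x i1 * (x i0 * x i1 - 1) = γ 0 := by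
      rw [hx0, hx1]; exact hQ2
    have hcval : ∀ j, j < N → eval x (cp j) = γ j := by
      intro j hj
      rw [evalcp x j hj]
      by_cases hj0 : j = 0
      · rw [if_pos hj0, hj0]
        exact hqval
      · rw [if_neg hj0]
        have hv : ((⟨j + 1, by omega⟩ : Fin n) : ℕ) = j + 1 := rfl
        rw [hx]
        simp only [hv]
        rw [if_neg (by omega), if_neg (by omega)]
        congr 1
    refine ⟨x, ?_⟩
    show (fun i => eval x (f i)) = zz
    funext i
    show eval x (f i) = zz i
    rcases Nat.lt_or_ge (i : ℕ) N with hi | hi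
    · rw [evalf1 x i hi, hcval (i : ℕ) hi, htval]
      have h2 := hγ (i : ℕ) hi
      rw [hZj (i : ℕ) (lt_trans hi hNn), Fin.eta] at h2
      exact h2
    · have hieq : (i : ℕ) = N := by omega
      rw [evalfN x i (by omega), htval]
      have hsum' : ∑ j ∈ Finset.range N, (eval x (cp j)) ^ 3 * (d - ((j : ℝ) + 1))
          = ∑ j ∈ Finset.range N, (γ j) ^ 3 * (d - ((j : ℝ) + 1)) :=
        Finset.sum_congr rfl fun j hj => by rw [hcval j (Finset.mem_range.mp hj)]
      rw [hsum', hsum, hwdef]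
      congr 1
      exact (Fin.ext hieq).symm
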